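/- For the step set {NE, SE, NW}, the counting generating function satisfies (1 - 3t)·Q(1,1;t) = 1 - 2·∑_{n≥0} (-1)^n Y_n(1) Y_{n+1}(1), where Y_n(1) are the iterates of the kernel root evaluated at x = 1. -/

import Mathlib

open Finset PowerSeries

/-- The partial sum of the first `k` steps of a walk. -/
def psum {n : ℕ} (w : Fin n → ℤ × ℤ) (k : ℕ) : ℤ × ℤ :=
  ∑ i ∈ Finset.univ.filter (fun i : Fin n => (i : ℕ) < k), w i

/-- A quarter-plane walk. -/
def IsQWalk (Y : Finset (ℤ × ℤ)) {n : ℕ} (w : Fin n → ℤ × ℤ) : Prop :=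
  (∀ i, w i ∈ Y) ∧ ∀ k, 0 ≤ (psum w k).1 ∧ 0 ≤ (psum w k).2

/-- The number of quarter-plane walks of length `n`. -/
noncomputable def walkCount (Y : Finset (ℤ × ℤ)) (n : ℕ) : ℕ :=
  Nat.card {w : Fin n → ℤ × ℤ // IsQWalk Y w}

/-- The counting generating function `Q(1,1;t)` for the step set
`{NE, SE, NW} = {(1,1),(1,-1),(-1,1)}`. -/
noncomputable def Wgf : PowerSeries ℚ :=
  PowerSeries.mk fun n => (walkCount {((1:ℤ),(1:ℤ)), (1,-1), (-1,1)} n : ℚ)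

/-- The (t-adically convergent) sum `∑_{n≥0} (-1)ⁿ Yₙ(1) Y_{n+1}(1)`:
since `Yₙ(1)` has `t`-order `n`, only `n ≤ m` contributes to the coefficient
of `tᵐ`. -/
noncomputable def altSum1 (Ys : ℕ → PowerSeries ℚ) : PowerSeries ℚ :=
  PowerSeries.mk fun m =>
    ∑ n ∈ Finset.range (m + 1),
      (-1 : ℚ) ^ n * PowerSeries.coeff m (Ys n * Ys (n + 1))

def St : Finset (ℤ × ℤ) := {((1:ℤ),(1:ℤ)), (1,-1), (-1,1)}

noncomputable def endCount (n : ℕ) (i j : ℤ) : ℕ :=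
  Nat.card {w : Fin n → ℤ × ℤ // IsQWalk St w ∧ psum w n = (i, j)}

lemma psum_zero {n : ℕ} (w : Fin n → ℤ × ℤ) : psum w 0 = 0 := by
  simp [psum]

lemma psum_succ {n : ℕ} (w : Fin n → ℤ × ℤ) (k : ℕ) (hk : k < n) :
    psum w (k + 1) = psum w k + w ⟨k, hk⟩ := by
  unfold psum
  have h : Finset.univ.filter (fun i : Fin n => (i : ℕ) < k + 1)
      = insert ⟨k, hk⟩ (Finset.univ.filter fun i : Fin n => (i : ℕ) < k) := by
    ext i
    simp only [mem_filter, mem_univ, true_and, mem_insert, Fin.ext_iff]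
    omega
  rw [h, Finset.sum_insert (by simp)]
  exact add_comm _ _

lemma psum_stable {n : ℕ} (w : Fin n → ℤ × ℤ) {k : ℕ} (h : n ≤ k) :
    psum w k = psum w n := by
  unfold psum
  congr 1
  ext i
  have := i.isLt
  simp only [mem_filter, mem_univ, true_and]
  omega

lemma psum_comp_castSucc {n : ℕ} (w : Fin (n + 1) → ℤ × ℤ) (k : ℕ) (hk : k ≤ n) :
    psum (w ∘ Fin.castSucc) k = psum w k := by
  induction k with
  | zero => simp [psum_zero]
  | succ k ih =>
    have hk' : k < n := hk
    rw [psum_succ _ k hk', psum_succ w k (by omega), ih (le_of_lt hk')]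
    rfl

lemma snoc_comp_castSucc {n : ℕ} (w : Fin n → ℤ × ℤ) (s : ℤ × ℤ) :
    (Fin.snoc w s : Fin (n+1) → ℤ × ℤ) ∘ Fin.castSucc = w := by
  funext i; simp [Fin.snoc_castSucc]

lemma psum_snoc_le {n : ℕ} (w : Fin n → ℤ × ℤ) (s : ℤ × ℤ) {k : ℕ} (hk : k ≤ n) :
    psum (Fin.snoc w s) k = psum w k := by
  rw [← psum_comp_castSucc (Fin.snoc w s) k hk, snoc_comp_castSucc]

lemma psum_snoc_top {n : ℕ} (w : Fin n → ℤ × ℤ) (s : ℤ × ℤ) :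
    psum (Fin.snoc w s) (n + 1) = psum w n + s := by
  rw [psum_succ _ n (Nat.lt_succ_self n), psum_snoc_le w s le_rfl]
  congr 1
  have : (⟨n, Nat.lt_succ_self n⟩ : Fin (n+1)) = Fin.last n := rfl
  rw [this, Fin.snoc_last]

lemma isQWalk_snoc {n : ℕ} {w : Fin n → ℤ × ℤ} {s : ℤ × ℤ} (hs : s ∈ St)
    (hw : IsQWalk St w) (h1 : 0 ≤ (psum w n + s).1) (h2 : 0 ≤ (psum w n + s).2) :
    IsQWalk St (Fin.snoc w s) := by
  constructor
  · intro i
    refine Fin.lastCases ?_ ?_ i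
    · simpa [Fin.snoc_last] using hs
    · intro j; simpa [Fin.snoc_castSucc] using hw.1 j
  · intro k
    rcases le_or_gt k n with h | h
    · rw [psum_snoc_le w s h]; exact hw.2 k
    · rw [psum_stable _ (show n + 1 ≤ k from h), psum_snoc_top]
      exact ⟨h1, h2⟩

lemma isQWalk_prefix {n : ℕ} {w : Fin (n + 1) → ℤ × ℤ} (hw : IsQWalk St w) :
    IsQWalk St (w ∘ Fin.castSucc) := by
  constructor
  · intro i; exact hw.1 _
  · intro k
    rcases le_or_gt k n with h | h
    · rw [psum_comp_castSucc w k h]; exact hw.2 k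
    · rw [psum_stable _ (show n ≤ k from le_of_lt h), psum_comp_castSucc w n le_rfl]
      exact hw.2 n

lemma finite_walks {n : ℕ} (p : (Fin n → ℤ × ℤ) → Prop) :
    Finite {w : Fin n → ℤ × ℤ // IsQWalk St w ∧ p w} := by
  apply Finite.of_injective (β := Fin n → St) (fun w i => ⟨w.1 i, w.2.1.1 i⟩)
  intro a b h
  apply Subtype.ext; funext i
  exact Subtype.ext_iff.mp (congrFun h i)

lemma finite_walks' {n : ℕ} : Finite {w : Fin n → ℤ × ℤ // IsQWalk St w} := by
  apply Finite.of_injective (β := Fin n → St) (fun w i => ⟨w.1 i, w.2.1 i⟩)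
  intro a b h
  apply Subtype.ext; funext i
  exact Subtype.ext_iff.mp (congrFun h i)

lemma card_fiber_sum {α : Type*} [Finite α] {β : Type*} [DecidableEq β]
    (f : α → β) (s : Finset β) (h : ∀ a, f a ∈ s) :
    Nat.card α = ∑ b ∈ s, Nat.card {a // f a = b} := by
  classical
  let f' : α → {b // b ∈ s} := fun a => ⟨f a, h a⟩
  haveI : ∀ b : {b // b ∈ s}, Fintype {a // f' a = b} := fun b => Fintype.ofFinite _
  haveI : Fintype α := Fintype.ofFinite _
  have e := Equiv.sigmaFiberEquiv f'
  rw [← Nat.card_congr e, Nat.card_eq_fintype_card, Fintype.card_sigma]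
  rw [← Finset.sum_coe_sort s (fun b => Nat.card {a // f a = b})]
  apply Finset.sum_congr rfl
  intro b _
  rw [Nat.card_eq_fintype_card]
  exact Fintype.card_congr (Equiv.subtypeEquivRight (fun a => by
    simp [f', Subtype.ext_iff]))

lemma step_bounds {s : ℤ × ℤ} (hs : s ∈ St) : s.1 ≤ 1 ∧ s.2 ≤ 1 := by
  simp only [St, mem_insert, mem_singleton] at hs
  rcases hs with h | h | h <;> subst h <;> exact ⟨by norm_num, by norm_num⟩

lemma psum_le {n : ℕ} {w : Fin n → ℤ × ℤ} (hw : ∀ i, w i ∈ St) (k : ℕ) :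
    (psum w k).1 ≤ n ∧ (psum w k).2 ≤ n := by
  unfold psum
  constructor
  · rw [Prod.fst_sum]
    calc ∑ i ∈ Finset.univ.filter (fun i : Fin n => (i : ℕ) < k), (w i).1
        ≤ (Finset.univ.filter (fun i : Fin n => (i : ℕ) < k)).card • (1 : ℤ) :=
          Finset.sum_le_card_nsmul _ _ _ (fun i _ => (step_bounds (hw i)).1)
      _ ≤ n := by
          rw [nsmul_eq_mul, mul_one]
          exact_mod_cast le_trans (Finset.card_filter_le _ _) (by simp)
  · rw [Prod.snd_sum]
    calc ∑ i ∈ Finset.univ.filter (fun i : Fin n => (i : ℕ) < k), (w i).2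
        ≤ (Finset.univ.filter (fun i : Fin n => (i : ℕ) < k)).card • (1 : ℤ) :=
          Finset.sum_le_card_nsmul _ _ _ (fun i _ => (step_bounds (hw i)).2)
      _ ≤ n := by
          rw [nsmul_eq_mul, mul_one]
          exact_mod_cast le_trans (Finset.card_filter_le _ _) (by simp)

lemma endCount_eq_zero {n : ℕ} {i j : ℤ}
    (h : i < 0 ∨ j < 0 ∨ (n : ℤ) < i ∨ (n : ℤ) < j) : endCount n i j = 0 := by
  unfold endCount
  have : IsEmpty {w : Fin n → ℤ × ℤ // IsQWalk St w ∧ psum w n = (i, j)} := by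
    constructor
    rintro ⟨w, hw, he⟩
    have h1 := hw.2 n
    have h2 := psum_le hw.1 n
    rw [he] at h1 h2
    simp only at h1 h2
    omega
  exact Nat.card_of_isEmpty

lemma endCount_cast_zero {n : ℕ} {i j : ℤ}
    (h : i < 0 ∨ j < 0 ∨ (n : ℤ) < i ∨ (n : ℤ) < j) :
    ((endCount n i j : ℕ) : ℚ) = 0 := by
  rw [endCount_eq_zero h]; norm_num

lemma endCount_zero (i j : ℤ) :
    endCount 0 i j = if i = 0 ∧ j = 0 then 1 else 0 := by
  split_ifs with h
  · obtain ⟨hi, hj⟩ := h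
    subst hi; subst hj
    unfold endCount
    haveI : Unique {w : Fin 0 → ℤ × ℤ // IsQWalk St w ∧ psum w 0 = (0, 0)} := by
      refine ⟨⟨⟨fun i => i.elim0, ⟨fun i => i.elim0, fun k => ?_⟩, by simp [psum_zero]; rfl⟩⟩, ?_⟩
      · rw [psum_stable _ (Nat.zero_le k), psum_zero]
        exact ⟨le_refl 0, le_refl 0⟩
      · rintro ⟨w, hw⟩
        apply Subtype.ext
        funext i
        exact i.elim0
    exact Nat.card_unique
  · unfold endCount
    have : IsEmpty {w : Fin 0 → ℤ × ℤ // IsQWalk St w ∧ psum w 0 = (i, j)} := by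
      constructor
      rintro ⟨w, hw, he⟩
      rw [psum_zero] at he
      exact h ⟨congrArg Prod.fst he.symm, congrArg Prod.snd he.symm⟩
    exact Nat.card_of_isEmpty

lemma swap_step {s : ℤ × ℤ} (hs : s ∈ St) : (s.2, s.1) ∈ St := by
  simp only [St, mem_insert, mem_singleton] at hs ⊢
  rcases hs with h | h | h <;> subst h <;> simp

lemma psum_swap {n : ℕ} (w : Fin n → ℤ × ℤ) (k : ℕ) :
    psum (fun t => ((w t).2, (w t).1)) k = ((psum w k).2, (psum w k).1) := by
  unfold psum
  exact Prod.ext (by simp [Prod.fst_sum, Prod.snd_sum]) (by simp [Prod.fst_sum, Prod.snd_sum])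

lemma isQWalk_swap {n : ℕ} {w : Fin n → ℤ × ℤ} (hw : IsQWalk St w) :
    IsQWalk St (fun t => ((w t).2, (w t).1)) := by
  refine ⟨fun i => swap_step (hw.1 i), fun k => ?_⟩
  rw [psum_swap]
  exact ⟨(hw.2 k).2, (hw.2 k).1⟩

lemma endCount_symm (n : ℕ) (i j : ℤ) : endCount n i j = endCount n j i := by
  unfold endCount
  apply Nat.card_congr
  refine ⟨fun w => ⟨fun t => ((w.1 t).2, (w.1 t).1), isQWalk_swap w.2.1, ?_⟩,
          fun w => ⟨fun t => ((w.1 t).2, (w.1 t).1), isQWalk_swap w.2.1, ?_⟩, ?_, ?_⟩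
  · rw [psum_swap, w.2.2]
  · rw [psum_swap, w.2.2]
  · rintro ⟨w, hw⟩; apply Subtype.ext; funext t; rfl
  · rintro ⟨w, hw⟩; apply Subtype.ext; funext t; rfl

lemma psum_last {n : ℕ} (w : Fin (n+1) → ℤ × ℤ) :
    psum w (n+1) = psum w n + w (Fin.last n) := psum_succ w n (Nat.lt_succ_self n)

lemma snoc_bij (n : ℕ) (s : ℤ × ℤ) (hs : s ∈ St) (P : ℤ × ℤ)
    (hP1 : 0 ≤ P.1) (hP2 : 0 ≤ P.2) :
    Nat.card {w : Fin (n+1) → ℤ × ℤ //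
        (IsQWalk St w ∧ psum w (n+1) = P) ∧ w (Fin.last n) = s}
      = Nat.card {w : Fin n → ℤ × ℤ // IsQWalk St w ∧ psum w n = P - s} := by
  apply Nat.card_congr
  refine ⟨fun w => ⟨w.1 ∘ Fin.castSucc, isQWalk_prefix w.2.1.1, ?_⟩,
          fun w => ⟨Fin.snoc w.1 s, ⟨⟨isQWalk_snoc hs w.2.1 ?_ ?_, ?_⟩, Fin.snoc_last _ _⟩⟩,
          ?_, ?_⟩
  · rw [psum_comp_castSucc _ _ le_rfl]
    have h := psum_last w.1
    rw [w.2.1.2, w.2.2] at h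
    exact eq_sub_of_add_eq h.symm
  · rw [w.2.2, sub_add_cancel]; exact hP1
  · rw [w.2.2, sub_add_cancel]; exact hP2
  · rw [psum_snoc_top, w.2.2, sub_add_cancel]
  · rintro ⟨w, hw⟩
    apply Subtype.ext
    show Fin.snoc (w ∘ Fin.castSucc) s = w
    funext i
    refine Fin.lastCases ?_ ?_ i
    · rw [Fin.snoc_last]; exact hw.2.symm
    · intro i; rw [Fin.snoc_castSucc]; rfl
  · rintro ⟨w, hw⟩
    apply Subtype.ext
    exact snoc_comp_castSucc w s

lemma endCount_succ (n : ℕ) (i j : ℤ) (hi : 0 ≤ i) (hj : 0 ≤ j) :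
    endCount (n+1) i j
      = endCount n (i-1) (j-1) + endCount n (i-1) (j+1) + endCount n (i+1) (j-1) := by
  haveI := finite_walks (n := n+1) (fun w => psum w (n+1) = (i, j))
  unfold endCount
  rw [card_fiber_sum
      (fun w : {w : Fin (n+1) → ℤ × ℤ // IsQWalk St w ∧ psum w (n+1) = (i, j)} =>
        w.1 (Fin.last n)) St (fun w => w.2.1.1 _)]
  have key : ∀ s ∈ St,
      Nat.card {a : {w : Fin (n+1) → ℤ × ℤ // IsQWalk St w ∧ psum w (n+1) = (i, j)} //
          a.1 (Fin.last n) = s}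
        = Nat.card {w : Fin n → ℤ × ℤ // IsQWalk St w ∧ psum w n = (i, j) - s} := by
    intro s hs
    rw [Nat.card_congr (Equiv.subtypeSubtypeEquivSubtypeInter
      (fun w : Fin (n+1) → ℤ × ℤ => IsQWalk St w ∧ psum w (n+1) = (i, j))
      (fun w => w (Fin.last n) = s))]
    exact snoc_bij n s hs (i, j) hi hj
  rw [Finset.sum_congr rfl key]
  have hSt : St = insert ((1:ℤ),(1:ℤ)) (insert ((1:ℤ),(-1:ℤ)) {((-1:ℤ),(1:ℤ))}) := rfl
  rw [hSt, Finset.sum_insert (by decide), Finset.sum_insert (by decide),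
      Finset.sum_singleton]
  have e1 : ((i,j) : ℤ × ℤ) - (1,1) = (i-1, j-1) := rfl
  have e2 : ((i,j) : ℤ × ℤ) - (1,-1) = (i-1, j+1) := by
    simp [Prod.ext_iff]
  have e3 : ((i,j) : ℤ × ℤ) - (-1,1) = (i+1, j-1) := by
    simp [Prod.ext_iff]
  rw [e1, e2, e3]
  omega

lemma walkCount_eq (n : ℕ) :
    walkCount St n = ∑ p ∈ Finset.Icc (0:ℤ) n ×ˢ Finset.Icc (0:ℤ) n, endCount n p.1 p.2 := by
  haveI := finite_walks' (n := n)
  unfold walkCount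
  rw [card_fiber_sum (fun w : {w : Fin n → ℤ × ℤ // IsQWalk St w} => psum w.1 n)
      (Finset.Icc (0:ℤ) n ×ˢ Finset.Icc (0:ℤ) n)
      (fun w => by
        rw [Finset.mem_product, Finset.mem_Icc, Finset.mem_Icc]
        have h1 := w.2.2 n
        have h2 := psum_le w.2.1 n
        exact ⟨⟨h1.1, h2.1⟩, ⟨h1.2, h2.2⟩⟩)]
  apply Finset.sum_congr rfl
  intro p _
  rw [Nat.card_congr (Equiv.subtypeSubtypeEquivSubtypeInter
      (fun w : Fin n → ℤ × ℤ => IsQWalk St w) (fun w => psum w n = p))]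
  unfold endCount
  congr 1

noncomputable def Qz (i j : ℤ) : PowerSeries ℚ :=
  PowerSeries.mk fun n => (endCount n i j : ℚ)

noncomputable def Hrow : PowerSeries ℚ :=
  PowerSeries.mk fun n => ∑ i ∈ Finset.Icc (0:ℤ) n, (endCount n i 0 : ℚ)

noncomputable def Phi (u : PowerSeries ℚ) : PowerSeries ℚ :=
  PowerSeries.mk fun m =>
    ∑ i ∈ Finset.Icc (0:ℤ) m, PowerSeries.coeff m (Qz i 0 * u ^ (i.toNat + 2))

noncomputable def Qhat (u v : PowerSeries ℚ) : PowerSeries ℚ :=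
  PowerSeries.mk fun m =>
    ∑ i ∈ Finset.Icc (0:ℤ) m, ∑ j ∈ Finset.Icc (0:ℤ) m,
      PowerSeries.coeff m (Qz i j * u ^ i.toNat * v ^ j.toNat)

lemma coeff_Qz (n : ℕ) (i j : ℤ) : coeff n (Qz i j) = (endCount n i j : ℚ) :=
  coeff_mk _ _

lemma Qz_neg {i j : ℤ} (h : i < 0 ∨ j < 0) : Qz i j = 0 := by
  ext n
  rw [coeff_Qz, map_zero]
  rw [endCount_eq_zero (by tauto)]
  norm_num

lemma Qz_symm (i j : ℤ) : Qz i j = Qz j i := by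
  ext n
  rw [coeff_Qz, coeff_Qz, endCount_symm]

lemma coeff_mul_zero_left {A B : PowerSeries ℚ} {m : ℕ}
    (h : ∀ k ≤ m, coeff k A = 0) : coeff m (A * B) = 0 := by
  rw [PowerSeries.coeff_mul]
  apply Finset.sum_eq_zero
  rintro ⟨a, b⟩ hab
  rw [Finset.HasAntidiagonal.mem_antidiagonal] at hab
  rw [h a (by omega), zero_mul]

lemma coeff_mul_zero_right {A B : PowerSeries ℚ} {m : ℕ}
    (h : ∀ k ≤ m, coeff k B = 0) : coeff m (A * B) = 0 := by
  rw [PowerSeries.coeff_mul]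
  apply Finset.sum_eq_zero
  rintro ⟨a, b⟩ hab
  rw [Finset.HasAntidiagonal.mem_antidiagonal] at hab
  rw [h b (by omega), mul_zero]

lemma key_vanish {M : ℕ} {i j : ℤ} (B : PowerSeries ℚ)
    (h : i < 0 ∨ j < 0 ∨ (M:ℤ) < i ∨ (M:ℤ) < j) :
    coeff M (Qz i j * B) = 0 := by
  rcases h with h | h | h | h
  · rw [Qz_neg (Or.inl h), zero_mul, map_zero]
  · rw [Qz_neg (Or.inr h), zero_mul, map_zero]
  · apply coeff_mul_zero_left
    intro k hk
    rw [coeff_Qz, endCount_eq_zero (by right; right; left; exact_mod_cast lt_of_le_of_lt (by exact_mod_cast hk : (k:ℤ) ≤ M) h)]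
    norm_num
  · apply coeff_mul_zero_left
    intro k hk
    rw [coeff_Qz, endCount_eq_zero (by right; right; right; exact_mod_cast lt_of_le_of_lt (by exact_mod_cast hk : (k:ℤ) ≤ M) h)]
    norm_num

lemma key_vanishX {M : ℕ} {i j : ℤ} (B : PowerSeries ℚ)
    (h : i < 0 ∨ j < 0 ∨ (M:ℤ) < i + 1 ∨ (M:ℤ) < j + 1) :
    coeff M (X * (Qz i j * B)) = 0 := by
  cases M with
  | zero =>
    rw [PowerSeries.coeff_zero_eq_constantCoeff, map_mul, constantCoeff_X, zero_mul]
  | succ k =>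
    rw [PowerSeries.coeff_succ_X_mul]
    apply key_vanish
    push_cast at h ⊢
    omega

lemma Icc_ins_top {a b : ℤ} (h : a ≤ b) : Finset.Icc a b = insert b (Finset.Icc a (b-1)) := by
  ext x
  simp only [Finset.mem_Icc, Finset.mem_insert]
  omega

lemma Icc_ins_bot {a b : ℤ} (h : a ≤ b) : Finset.Icc a b = insert a (Finset.Icc (a+1) b) := by
  ext x
  simp only [Finset.mem_Icc, Finset.mem_insert]
  omega

lemma sum_shift_down (M : ℕ) (G : ℤ → ℚ) (h1 : G (-1) = 0) (h2 : G M = 0) :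
    ∑ i ∈ Finset.Icc (0:ℤ) M, G (i-1) = ∑ i ∈ Finset.Icc (0:ℤ) M, G i := by
  have e1 : ∑ i ∈ Finset.Icc (0:ℤ) M, G (i-1)
      = ∑ i ∈ Finset.Icc (-1:ℤ) ((M:ℤ)-1), G i := by
    rw [show ((-1:ℤ)) = 0 + (-1) by ring, show ((M:ℤ)-1) = (M:ℤ) + (-1) by ring,
        ← Finset.map_add_right_Icc, Finset.sum_map]
    apply Finset.sum_congr rfl
    intro x _
    simp [addRightEmbedding, sub_eq_add_neg]
  have e2 : Finset.Icc (-1:ℤ) ((M:ℤ)-1) = insert (-1:ℤ) (Finset.Icc 0 ((M:ℤ)-1)) := by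
    rw [Icc_ins_bot (by omega)]
    norm_num
  have e3 : Finset.Icc (0:ℤ) (M:ℤ) = insert (M:ℤ) (Finset.Icc 0 ((M:ℤ)-1)) :=
    Icc_ins_top (by omega)
  rw [e1, e2, Finset.sum_insert (by simp), h1, zero_add, e3,
      Finset.sum_insert (by simp), h2, zero_add]

lemma sum_shift_up (M : ℕ) (G : ℤ → ℚ) (h2 : G ((M:ℤ)+1) = 0) :
    ∑ i ∈ Finset.Icc (0:ℤ) M, G (i+1) = (∑ i ∈ Finset.Icc (0:ℤ) M, G i) - G 0 := by
  have e1 : ∑ i ∈ Finset.Icc (0:ℤ) M, G (i+1)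
      = ∑ i ∈ Finset.Icc (1:ℤ) ((M:ℤ)+1), G i := by
    rw [show Finset.Icc (1:ℤ) ((M:ℤ)+1) = Finset.Icc (0+1 : ℤ) ((M:ℤ)+1) by norm_num,
        ← Finset.map_add_right_Icc, Finset.sum_map]
    apply Finset.sum_congr rfl
    intro x _
    simp [addRightEmbedding]
  have e2 : Finset.Icc (1:ℤ) ((M:ℤ)+1) = insert ((M:ℤ)+1) (Finset.Icc 1 (M:ℤ)) := by
    rw [Icc_ins_top (by omega)]
    norm_num
  have e3 : Finset.Icc (0:ℤ) (M:ℤ) = insert (0:ℤ) (Finset.Icc 1 (M:ℤ)) := by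
    rw [Icc_ins_bot (by omega)]
    norm_num
  rw [e1, e2, Finset.sum_insert (by simp), h2, zero_add, e3,
      Finset.sum_insert (by simp), add_comm, add_sub_cancel_right]

lemma total_eq (n : ℕ) :
    ∑ i ∈ Finset.Icc (0:ℤ) ((n:ℤ)+1), ∑ j ∈ Finset.Icc (0:ℤ) ((n:ℤ)+1), (endCount n i j : ℚ)
      = (walkCount St n : ℚ) := by
  have trim_inner : ∀ i : ℤ,
      ∑ j ∈ Finset.Icc (0:ℤ) ((n:ℤ)+1), (endCount n i j : ℚ)
        = ∑ j ∈ Finset.Icc (0:ℤ) (n:ℤ), (endCount n i j : ℚ) := by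
    intro i
    rw [Icc_ins_top (by omega : (0:ℤ) ≤ (n:ℤ)+1), Finset.sum_insert (by simp),
        endCount_eq_zero (by omega)]
    norm_num
  rw [Finset.sum_congr rfl (fun i _ => trim_inner i)]
  rw [Icc_ins_top (by omega : (0:ℤ) ≤ (n:ℤ)+1), Finset.sum_insert (by simp)]
  rw [Finset.sum_eq_zero (fun j _ => by rw [endCount_eq_zero (by omega)]; norm_num), zero_add]
  rw [walkCount_eq n, Nat.cast_sum, Finset.sum_product]
  norm_num

lemma row_eq (n : ℕ) :
    ∑ i ∈ Finset.Icc (0:ℤ) ((n:ℤ)+1), (endCount n i 0 : ℚ)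
      = ∑ i ∈ Finset.Icc (0:ℤ) (n:ℤ), (endCount n i 0 : ℚ) := by
  rw [Icc_ins_top (by omega : (0:ℤ) ≤ (n:ℤ)+1), Finset.sum_insert (by simp),
      endCount_eq_zero (by omega)]
  norm_num

lemma walk_rec (n : ℕ) :
    (walkCount St (n+1) : ℚ)
      = 3 * (walkCount St n : ℚ)
        - 2 * ∑ i ∈ Finset.Icc (0:ℤ) (n:ℤ), (endCount n i 0 : ℚ) := by
  have hbox : ((n+1 : ℕ) : ℤ) = (n:ℤ)+1 := by push_cast; ring
  rw [walkCount_eq (n+1), Nat.cast_sum, Finset.sum_product, hbox]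
  have hexp : ∀ i ∈ Finset.Icc (0:ℤ) ((n:ℤ)+1), ∀ j ∈ Finset.Icc (0:ℤ) ((n:ℤ)+1),
      (endCount (n+1) i j : ℚ)
        = (endCount n (i-1) (j-1) : ℚ) + (endCount n (i-1) (j+1) : ℚ)
          + (endCount n (i+1) (j-1) : ℚ) := by
    intro i hi j hj
    rw [Finset.mem_Icc] at hi hj
    rw [endCount_succ n i j hi.1 hj.1]
    push_cast
    ring
  rw [Finset.sum_congr rfl (fun i hi => Finset.sum_congr rfl (fun j hj => hexp i hi j hj))]
  have split : ∀ i : ℤ,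
      ∑ j ∈ Finset.Icc (0:ℤ) ((n:ℤ)+1),
        ((endCount n (i-1) (j-1) : ℚ) + (endCount n (i-1) (j+1) : ℚ)
          + (endCount n (i+1) (j-1) : ℚ))
      = (∑ j ∈ Finset.Icc (0:ℤ) ((n:ℤ)+1), (endCount n (i-1) (j-1) : ℚ))
        + (∑ j ∈ Finset.Icc (0:ℤ) ((n:ℤ)+1), (endCount n (i-1) (j+1) : ℚ))
        + (∑ j ∈ Finset.Icc (0:ℤ) ((n:ℤ)+1), (endCount n (i+1) (j-1) : ℚ)) := by
    intro i
    rw [Finset.sum_add_distrib, Finset.sum_add_distrib]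
  rw [Finset.sum_congr rfl (fun i _ => split i), Finset.sum_add_distrib,
      Finset.sum_add_distrib]
  -- abbreviations
  set G : ℤ → ℚ := fun i => ∑ j ∈ Finset.Icc (0:ℤ) ((n:ℤ)+1), (endCount n i j : ℚ) with hG
  have hGzero : ∀ i : ℤ, (i < 0 ∨ (n:ℤ) < i) → G i = 0 := by
    intro i hi
    apply Finset.sum_eq_zero
    intro j _
    rw [endCount_eq_zero (by omega)]
    norm_num
  have hE0 : ∀ i : ℤ, (i < 0 ∨ (n:ℤ) < i) → (endCount n i 0 : ℚ) = 0 := by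
    intro i hi
    rw [endCount_eq_zero (by omega)]
    norm_num
  -- term 1
  have T1 : ∑ i ∈ Finset.Icc (0:ℤ) ((n:ℤ)+1),
      (∑ j ∈ Finset.Icc (0:ℤ) ((n:ℤ)+1), (endCount n (i-1) (j-1) : ℚ))
      = ∑ i ∈ Finset.Icc (0:ℤ) ((n:ℤ)+1), G i := by
    have inner : ∀ i : ℤ, ∑ j ∈ Finset.Icc (0:ℤ) ((n:ℤ)+1), (endCount n (i-1) (j-1) : ℚ)
        = G (i-1) := by
      intro i
      have := sum_shift_down (n+1) (fun j => (endCount n (i-1) j : ℚ))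
        (endCount_cast_zero (by omega)) (endCount_cast_zero (by push_cast; omega))
      rw [hbox] at this
      exact this
    rw [Finset.sum_congr rfl (fun i _ => inner i)]
    have := sum_shift_down (n+1) G (hGzero _ (by omega)) (by
      apply hGzero
      push_cast
      omega)
    rw [hbox] at this
    exact this
  -- term 2
  have T2 : ∑ i ∈ Finset.Icc (0:ℤ) ((n:ℤ)+1),
      (∑ j ∈ Finset.Icc (0:ℤ) ((n:ℤ)+1), (endCount n (i-1) (j+1) : ℚ))
      = (∑ i ∈ Finset.Icc (0:ℤ) ((n:ℤ)+1), G i)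
        - ∑ i ∈ Finset.Icc (0:ℤ) ((n:ℤ)+1), (endCount n i 0 : ℚ) := by
    have inner : ∀ i : ℤ, ∑ j ∈ Finset.Icc (0:ℤ) ((n:ℤ)+1), (endCount n (i-1) (j+1) : ℚ)
        = G (i-1) - (endCount n (i-1) 0 : ℚ) := by
      intro i
      have := sum_shift_up (n+1) (fun j => (endCount n (i-1) j : ℚ))
        (endCount_cast_zero (by push_cast; omega))
      rw [hbox] at this
      exact this
    rw [Finset.sum_congr rfl (fun i _ => inner i), Finset.sum_sub_distrib]
    congr 1
    · have := sum_shift_down (n+1) G (hGzero _ (by omega)) (hGzero _ (by push_cast; omega))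
      rw [hbox] at this
      exact this
    · have := sum_shift_down (n+1) (fun i => (endCount n i 0 : ℚ))
        (hE0 _ (by omega)) (hE0 _ (by push_cast; omega))
      rw [hbox] at this
      exact this
  -- term 3
  have T3 : ∑ i ∈ Finset.Icc (0:ℤ) ((n:ℤ)+1),
      (∑ j ∈ Finset.Icc (0:ℤ) ((n:ℤ)+1), (endCount n (i+1) (j-1) : ℚ))
      = (∑ i ∈ Finset.Icc (0:ℤ) ((n:ℤ)+1), G i)
        - ∑ i ∈ Finset.Icc (0:ℤ) ((n:ℤ)+1), (endCount n i 0 : ℚ) := by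
    have inner : ∀ i : ℤ, ∑ j ∈ Finset.Icc (0:ℤ) ((n:ℤ)+1), (endCount n (i+1) (j-1) : ℚ)
        = G (i+1) := by
      intro i
      have := sum_shift_down (n+1) (fun j => (endCount n (i+1) j : ℚ))
        (endCount_cast_zero (by omega)) (endCount_cast_zero (by push_cast; omega))
      rw [hbox] at this
      exact this
    rw [Finset.sum_congr rfl (fun i _ => inner i)]
    have hup := sum_shift_up (n+1) G (hGzero _ (by push_cast; omega))
    rw [hbox] at hup
    rw [hup]
    congr 1
    rw [hG]
    simp only
    rw [Finset.sum_congr rfl (fun j _ => by rw [endCount_symm n 0 j])]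
  rw [T1, T2, T3, total_eq n, row_eq n]
  ring

lemma walkCount_zero : walkCount St 0 = 1 := by
  unfold walkCount
  haveI : Unique {w : Fin 0 → ℤ × ℤ // IsQWalk St w} := by
    refine ⟨⟨⟨fun i => i.elim0, ⟨fun i => i.elim0, fun k => ?_⟩⟩⟩, ?_⟩
    · rw [psum_stable _ (Nat.zero_le k), psum_zero]
      exact ⟨le_refl 0, le_refl 0⟩
    · rintro ⟨w, hw⟩
      apply Subtype.ext
      funext i
      exact i.elim0
  exact Nat.card_unique

lemma three_smul (φ : PowerSeries ℚ) (n : ℕ) :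
    coeff n ((3 : PowerSeries ℚ) * φ) = 3 * coeff n φ := by
  have : (3 : PowerSeries ℚ) = C (3:ℚ) := by
    rw [map_ofNat]
  rw [this, PowerSeries.coeff_C_mul]

lemma two_smul' (φ : PowerSeries ℚ) (n : ℕ) :
    coeff n ((2 : PowerSeries ℚ) * φ) = 2 * coeff n φ := by
  have : (2 : PowerSeries ℚ) = C (2:ℚ) := by
    rw [map_ofNat]
  rw [this, PowerSeries.coeff_C_mul]

lemma partA :
    (1 - 3 * PowerSeries.X) * (PowerSeries.mk fun n => (walkCount St n : ℚ))
      = 1 - 2 * (PowerSeries.X * Hrow) := by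
  have hexp : (1 - 3 * PowerSeries.X) * (PowerSeries.mk fun n => (walkCount St n : ℚ))
      = (PowerSeries.mk fun n => (walkCount St n : ℚ))
        - 3 * (PowerSeries.X * (PowerSeries.mk fun n => (walkCount St n : ℚ))) := by
    ring
  rw [hexp]
  ext n
  rw [map_sub, map_sub, three_smul, two_smul']
  cases n with
  | zero =>
    simp [walkCount_zero]
  | succ n =>
    rw [PowerSeries.coeff_succ_X_mul, PowerSeries.coeff_succ_X_mul, coeff_mk, coeff_mk,
        walk_rec n]
    have h1 : coeff (n+1) (1 : PowerSeries ℚ) = 0 := by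
      rw [PowerSeries.coeff_one]
      simp
    rw [h1]
    have hc : coeff n Hrow = ∑ i ∈ Finset.Icc (0:ℤ) (n:ℤ), (endCount n i 0 : ℚ) :=
      coeff_mk _ _
    rw [hc]
    ring

lemma Qz_rec {i j : ℤ} (hi : 0 ≤ i) (hj : 0 ≤ j) :
    Qz i j = (if i = 0 ∧ j = 0 then 1 else 0)
      + PowerSeries.X * (Qz (i-1) (j-1) + Qz (i-1) (j+1) + Qz (i+1) (j-1)) := by
  obtain ⟨a, rfl⟩ := Int.eq_ofNat_of_zero_le hi
  obtain ⟨b, rfl⟩ := Int.eq_ofNat_of_zero_le hj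
  ext n
  cases n with
  | zero =>
    rw [map_add]
    have hX : coeff 0 (PowerSeries.X * (Qz ((a:ℤ)-1) ((b:ℤ)-1) + Qz ((a:ℤ)-1) ((b:ℤ)+1)
        + Qz ((a:ℤ)+1) ((b:ℤ)-1))) = 0 := by
      rw [PowerSeries.coeff_zero_eq_constantCoeff, map_mul, constantCoeff_X, zero_mul]
    rw [hX, add_zero, coeff_Qz, endCount_zero]
    split_ifs with h <;> simp_all
  | succ n =>
    rw [map_add, PowerSeries.coeff_succ_X_mul]
    have hite : coeff (n+1) (if (a:ℤ) = 0 ∧ (b:ℤ) = 0 then (1 : PowerSeries ℚ) else 0) = 0 := by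
      split_ifs
      · rw [PowerSeries.coeff_one]; simp
      · simp
    rw [hite, zero_add, map_add, map_add, coeff_Qz,
        endCount_succ n a b (by positivity) (by positivity), coeff_Qz, coeff_Qz, coeff_Qz]
    push_cast
    ring

lemma coeff_mul_congr {A B Cc : PowerSeries ℚ} {M : ℕ}
    (h : ∀ l ≤ M, coeff l A = coeff l B) :
    coeff M (Cc * A) = coeff M (Cc * B) := by
  rw [PowerSeries.coeff_mul, PowerSeries.coeff_mul]
  apply Finset.sum_congr rfl
  rintro ⟨a, b⟩ hab
  rw [Finset.HasAntidiagonal.mem_antidiagonal] at hab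
  rw [h b (by omega)]

noncomputable def FQ (M : ℕ) (u v : PowerSeries ℚ) : PowerSeries ℚ :=
  ∑ i ∈ Finset.Icc (0:ℤ) M, ∑ j ∈ Finset.Icc (0:ℤ) M, Qz i j * u ^ i.toNat * v ^ j.toNat

noncomputable def PhiF (M : ℕ) (u : PowerSeries ℚ) : PowerSeries ℚ :=
  ∑ i ∈ Finset.Icc (0:ℤ) M, Qz i 0 * u ^ (i.toNat + 2)

lemma triple_vanish {M : ℕ} {i j : ℤ} (u v : PowerSeries ℚ) (a b : ℕ)
    (h : i < 0 ∨ j < 0 ∨ (M:ℤ) < i ∨ (M:ℤ) < j) :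
    coeff M (Qz i j * u ^ a * v ^ b) = 0 := by
  rw [mul_assoc]
  exact key_vanish _ h

lemma g_vanish {M : ℕ} {i j : ℤ} (u v : PowerSeries ℚ) (a b : ℕ)
    (h : i < 0 ∨ j < 0 ∨ (M:ℤ) < i + 1 ∨ (M:ℤ) < j + 1) :
    coeff M (PowerSeries.X * (Qz i j * u ^ a * v ^ b)) = 0 := by
  rw [mul_assoc (Qz i j)]
  exact key_vanishX _ h

lemma coeff_Qhat_eq {u v : PowerSeries ℚ} {M l : ℕ} (hl : l ≤ M) :
    coeff l (Qhat u v) = coeff l (FQ M u v) := by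
  have h1 : coeff l (FQ M u v)
      = ∑ i ∈ Finset.Icc (0:ℤ) M, ∑ j ∈ Finset.Icc (0:ℤ) M,
          coeff l (Qz i j * u ^ i.toNat * v ^ j.toNat) := by
    unfold FQ
    rw [map_sum]
    exact Finset.sum_congr rfl fun i _ => map_sum _ _ _
  rw [h1]
  have h2 : coeff l (Qhat u v)
      = ∑ i ∈ Finset.Icc (0:ℤ) l, ∑ j ∈ Finset.Icc (0:ℤ) l,
          coeff l (Qz i j * u ^ i.toNat * v ^ j.toNat) := by
    unfold Qhat
    rw [PowerSeries.coeff_mk]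
  rw [h2]
  have hsub : Finset.Icc (0:ℤ) l ⊆ Finset.Icc (0:ℤ) M :=
    Finset.Icc_subset_Icc le_rfl (by exact_mod_cast hl)
  have hinner : ∀ i : ℤ,
      ∑ j ∈ Finset.Icc (0:ℤ) l, coeff l (Qz i j * u ^ i.toNat * v ^ j.toNat)
        = ∑ j ∈ Finset.Icc (0:ℤ) M, coeff l (Qz i j * u ^ i.toNat * v ^ j.toNat) := by
    intro i
    apply Finset.sum_subset hsub
    intro j _ hj
    have hj' : ¬ (0 ≤ j ∧ j ≤ (l:ℤ)) := by simpa [Finset.mem_Icc] using hj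
    apply triple_vanish
    omega
  rw [Finset.sum_congr rfl (fun i _ => hinner i)]
  apply Finset.sum_subset hsub
  intro i _ hi
  have hi' : ¬ (0 ≤ i ∧ i ≤ (l:ℤ)) := by simpa [Finset.mem_Icc] using hi
  apply Finset.sum_eq_zero
  intro j _
  apply triple_vanish
  omega

lemma coeff_Phi_eq {u : PowerSeries ℚ} {M l : ℕ} (hl : l ≤ M) :
    coeff l (Phi u) = coeff l (PhiF M u) := by
  have h1 : coeff l (PhiF M u)
      = ∑ i ∈ Finset.Icc (0:ℤ) M, coeff l (Qz i 0 * u ^ (i.toNat + 2)) := map_sum _ _ _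
  rw [h1]
  have h2 : coeff l (Phi u)
      = ∑ i ∈ Finset.Icc (0:ℤ) l, coeff l (Qz i 0 * u ^ (i.toNat + 2)) := by
    unfold Phi
    rw [PowerSeries.coeff_mk]
  rw [h2]
  apply Finset.sum_subset (Finset.Icc_subset_Icc le_rfl (by exact_mod_cast hl))
  intro i _ hi
  have hi' : ¬ (0 ≤ i ∧ i ≤ (l:ℤ)) := by simpa [Finset.mem_Icc] using hi
  apply key_vanish
  omega

lemma coeff_term_zero_left {M : ℕ} (u v : PowerSeries ℚ) (a b : ℕ) {i j : ℤ}
    (h : i < 0 ∨ j < 0) :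
    coeff M (PowerSeries.X * (Qz i j * u ^ a * v ^ b)) = 0 := by
  rw [Qz_neg h, zero_mul, zero_mul, mul_zero, map_zero]

set_option maxHeartbeats 2000000 in
theorem FE (u v : PowerSeries ℚ) :
    (u * v - PowerSeries.X * (u^2 * v^2 + u^2 + v^2)) * Qhat u v
      = u * v - PowerSeries.X * Phi u - PowerSeries.X * Phi v := by
  ext M
  set K := u * v - PowerSeries.X * (u^2 * v^2 + u^2 + v^2) with hK
  have e0 : coeff M (K * Qhat u v) = coeff M (K * FQ M u v) :=
    coeff_mul_congr (fun l hl => coeff_Qhat_eq hl)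
  have e1 : coeff M (PowerSeries.X * Phi u) = coeff M (PowerSeries.X * PhiF M u) :=
    coeff_mul_congr (fun l hl => coeff_Phi_eq hl)
  have e2 : coeff M (PowerSeries.X * Phi v) = coeff M (PowerSeries.X * PhiF M v) :=
    coeff_mul_congr (fun l hl => coeff_Phi_eq hl)
  rw [map_sub, map_sub, e0, e1, e2]
  -- expand the product over the double sum
  have e4 : coeff M (K * FQ M u v)
      = ∑ i ∈ Finset.Icc (0:ℤ) M, ∑ j ∈ Finset.Icc (0:ℤ) M,
          coeff M (K * (Qz i j * u ^ i.toNat * v ^ j.toNat)) := by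
    have : K * FQ M u v = ∑ i ∈ Finset.Icc (0:ℤ) M, ∑ j ∈ Finset.Icc (0:ℤ) M,
        K * (Qz i j * u ^ i.toNat * v ^ j.toNat) := by
      unfold FQ
      rw [Finset.mul_sum]
      exact Finset.sum_congr rfl fun i _ => Finset.mul_sum _ _ _
    rw [this, map_sum]
    exact Finset.sum_congr rfl fun i _ => map_sum _ _ _
  rw [e4]
  -- the per-term expansion
  have hKT : ∀ i ∈ Finset.Icc (0:ℤ) (M:ℤ), ∀ j ∈ Finset.Icc (0:ℤ) (M:ℤ),
      coeff M (K * (Qz i j * u ^ i.toNat * v ^ j.toNat))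
      = ((if i = 0 ∧ j = 0 then coeff M (u * v) else 0)
        + coeff M (PowerSeries.X * (Qz (i-1) (j-1) * u ^ (i.toNat+1) * v ^ (j.toNat+1)))
        + coeff M (PowerSeries.X * (Qz (i-1) (j+1) * u ^ (i.toNat+1) * v ^ (j.toNat+1)))
        + coeff M (PowerSeries.X * (Qz (i+1) (j-1) * u ^ (i.toNat+1) * v ^ (j.toNat+1))))
        - coeff M (PowerSeries.X * (Qz i j * u ^ (i.toNat+2) * v ^ (j.toNat+2)))
        - coeff M (PowerSeries.X * (Qz i j * u ^ (i.toNat+2) * v ^ (j.toNat)))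
        - coeff M (PowerSeries.X * (Qz i j * u ^ (i.toNat) * v ^ (j.toNat+2))) := by
    intro i hi j hj
    rw [Finset.mem_Icc] at hi hj
    have hsplit : K * (Qz i j * u ^ i.toNat * v ^ j.toNat)
        = u * v * (Qz i j * u ^ i.toNat * v ^ j.toNat)
          - (PowerSeries.X * (Qz i j * u ^ (i.toNat+2) * v ^ (j.toNat+2))
             + PowerSeries.X * (Qz i j * u ^ (i.toNat+2) * v ^ (j.toNat))
             + PowerSeries.X * (Qz i j * u ^ (i.toNat) * v ^ (j.toNat+2))) := by
      rw [hK]; ring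
    have huv : u * v * (Qz i j * u ^ i.toNat * v ^ j.toNat)
        = (if i = 0 ∧ j = 0 then (1:PowerSeries ℚ) else 0) * (u ^ (i.toNat+1) * v ^ (j.toNat+1))
          + PowerSeries.X * (Qz (i-1) (j-1) * u ^ (i.toNat+1) * v ^ (j.toNat+1))
          + PowerSeries.X * (Qz (i-1) (j+1) * u ^ (i.toNat+1) * v ^ (j.toNat+1))
          + PowerSeries.X * (Qz (i+1) (j-1) * u ^ (i.toNat+1) * v ^ (j.toNat+1)) := by
      conv_lhs => rw [Qz_rec hi.1 hj.1]
      ring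
    rw [hsplit, huv]
    have hit : coeff M ((if i = 0 ∧ j = 0 then (1:PowerSeries ℚ) else 0)
        * (u ^ (i.toNat+1) * v ^ (j.toNat+1)))
        = (if i = 0 ∧ j = 0 then coeff M (u * v) else 0) := by
      split_ifs with h
      · obtain ⟨rfl, rfl⟩ := h
        norm_num
      · rw [zero_mul, map_zero]
    rw [map_sub, map_add, map_add, map_add, map_add, map_add, hit]
    ring
  rw [Finset.sum_congr rfl (fun i hi => Finset.sum_congr rfl (fun j hj => hKT i hi j hj))]
  simp only [Finset.sum_sub_distrib, Finset.sum_add_distrib]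
  -- now seven double sums
  have hS0 : ∑ i ∈ Finset.Icc (0:ℤ) M, ∑ j ∈ Finset.Icc (0:ℤ) M,
      (if i = 0 ∧ j = 0 then coeff M (u * v) else 0) = coeff M (u * v) := by
    rw [Finset.sum_eq_single_of_mem (0:ℤ)
        (by rw [Finset.mem_Icc]; constructor <;> omega)
        (fun b _ hb => Finset.sum_eq_zero (fun j _ => if_neg (by tauto)))]
    simp only [true_and, eq_self_iff_true, if_true]
    rw [Finset.sum_ite_eq' (Finset.Icc (0:ℤ) M) (0:ℤ) (fun _ => coeff M (u * v))]
    rw [if_pos (by rw [Finset.mem_Icc]; constructor <;> omega)]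
  have hPhiu : ∑ i ∈ Finset.Icc (0:ℤ) M,
      coeff M (PowerSeries.X * (Qz i 0 * u ^ (i.toNat+2) * v ^ ((0:ℤ).toNat)))
      = coeff M (PowerSeries.X * PhiF M u) := by
    have hx : PowerSeries.X * PhiF M u
        = ∑ i ∈ Finset.Icc (0:ℤ) M, PowerSeries.X * (Qz i 0 * u ^ (i.toNat+2)) := by
      unfold PhiF; rw [Finset.mul_sum]
    rw [hx, map_sum]
    apply Finset.sum_congr rfl
    intro i _
    rw [show ((0:ℤ).toNat) = 0 from rfl, pow_zero, mul_one]
  have hPhiv : ∑ j ∈ Finset.Icc (0:ℤ) M,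
      coeff M (PowerSeries.X * (Qz 0 j * u ^ ((0:ℤ).toNat) * v ^ (j.toNat+2)))
      = coeff M (PowerSeries.X * PhiF M v) := by
    have hx : PowerSeries.X * PhiF M v
        = ∑ j ∈ Finset.Icc (0:ℤ) M, PowerSeries.X * (Qz j 0 * v ^ (j.toNat+2)) := by
      unfold PhiF; rw [Finset.mul_sum]
    rw [hx, map_sum]
    apply Finset.sum_congr rfl
    intro j _
    rw [Qz_symm 0 j, show ((0:ℤ).toNat) = 0 from rfl, pow_zero, mul_one]
  have hSa : (∑ i ∈ Finset.Icc (0:ℤ) M, ∑ j ∈ Finset.Icc (0:ℤ) M,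
      coeff M (PowerSeries.X * (Qz (i-1) (j-1) * u ^ (i.toNat+1) * v ^ (j.toNat+1))))
      = ∑ i ∈ Finset.Icc (0:ℤ) M, ∑ j ∈ Finset.Icc (0:ℤ) M,
          coeff M (PowerSeries.X * (Qz i j * u ^ (i.toNat+2) * v ^ (j.toNat+2))) := by
    have hpt : ∀ i ∈ Finset.Icc (0:ℤ) (M:ℤ), ∀ j ∈ Finset.Icc (0:ℤ) (M:ℤ),
        coeff M (PowerSeries.X * (Qz (i-1) (j-1) * u ^ (i.toNat+1) * v ^ (j.toNat+1)))
        = coeff M (PowerSeries.X * (Qz (i-1) (j-1) * u ^ ((i-1).toNat+2) * v ^ ((j-1).toNat+2))) := by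
      intro i hi j hj
      rw [Finset.mem_Icc] at hi hj
      by_cases hc : 1 ≤ i ∧ 1 ≤ j
      · rw [show (i-1).toNat+2 = i.toNat+1 by omega, show (j-1).toNat+2 = j.toNat+1 by omega]
      · rw [Qz_neg (by omega)]
        simp
    rw [Finset.sum_congr rfl (fun i hi => Finset.sum_congr rfl (fun j hj => hpt i hi j hj))]
    have hinner : ∀ i : ℤ,
        (∑ j ∈ Finset.Icc (0:ℤ) M,
          coeff M (PowerSeries.X * (Qz (i-1) (j-1) * u ^ ((i-1).toNat+2) * v ^ ((j-1).toNat+2))))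
        = ∑ j ∈ Finset.Icc (0:ℤ) M,
            coeff M (PowerSeries.X * (Qz (i-1) j * u ^ ((i-1).toNat+2) * v ^ (j.toNat+2))) := by
      intro i
      exact sum_shift_down M
        (fun b => coeff M (PowerSeries.X * (Qz (i-1) b * u ^ ((i-1).toNat+2) * v ^ (b.toNat+2))))
        (coeff_term_zero_left u v _ _ (by omega))
        (g_vanish u v _ _ (by omega))
    rw [Finset.sum_congr rfl (fun i _ => hinner i)]
    exact sum_shift_down M
      (fun a => ∑ j ∈ Finset.Icc (0:ℤ) M,
        coeff M (PowerSeries.X * (Qz a j * u ^ (a.toNat+2) * v ^ (j.toNat+2))))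
      (Finset.sum_eq_zero fun j _ => coeff_term_zero_left u v _ _ (by omega))
      (Finset.sum_eq_zero fun j _ => g_vanish u v _ _ (by omega))
  have hSb : (∑ i ∈ Finset.Icc (0:ℤ) M, ∑ j ∈ Finset.Icc (0:ℤ) M,
      coeff M (PowerSeries.X * (Qz (i-1) (j+1) * u ^ (i.toNat+1) * v ^ (j.toNat+1))))
      = (∑ i ∈ Finset.Icc (0:ℤ) M, ∑ j ∈ Finset.Icc (0:ℤ) M,
          coeff M (PowerSeries.X * (Qz i j * u ^ (i.toNat+2) * v ^ (j.toNat))))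
        - coeff M (PowerSeries.X * PhiF M u) := by
    have hpt : ∀ i ∈ Finset.Icc (0:ℤ) (M:ℤ), ∀ j ∈ Finset.Icc (0:ℤ) (M:ℤ),
        coeff M (PowerSeries.X * (Qz (i-1) (j+1) * u ^ (i.toNat+1) * v ^ (j.toNat+1)))
        = coeff M (PowerSeries.X * (Qz (i-1) (j+1) * u ^ ((i-1).toNat+2) * v ^ ((j+1).toNat))) := by
      intro i hi j hj
      rw [Finset.mem_Icc] at hi hj
      by_cases hc : 1 ≤ i
      · rw [show (i-1).toNat+2 = i.toNat+1 by omega, show (j+1).toNat = j.toNat+1 by omega]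
      · rw [Qz_neg (by omega)]
        simp
    rw [Finset.sum_congr rfl (fun i hi => Finset.sum_congr rfl (fun j hj => hpt i hi j hj))]
    have hinner : ∀ i : ℤ,
        (∑ j ∈ Finset.Icc (0:ℤ) M,
          coeff M (PowerSeries.X * (Qz (i-1) (j+1) * u ^ ((i-1).toNat+2) * v ^ ((j+1).toNat))))
        = (∑ j ∈ Finset.Icc (0:ℤ) M,
            coeff M (PowerSeries.X * (Qz (i-1) j * u ^ ((i-1).toNat+2) * v ^ (j.toNat))))
          - coeff M (PowerSeries.X * (Qz (i-1) 0 * u ^ ((i-1).toNat+2) * v ^ ((0:ℤ).toNat))) := by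
      intro i
      exact sum_shift_up M
        (fun b => coeff M (PowerSeries.X * (Qz (i-1) b * u ^ ((i-1).toNat+2) * v ^ (b.toNat))))
        (g_vanish u v _ _ (by omega))
    rw [Finset.sum_congr rfl (fun i _ => hinner i), Finset.sum_sub_distrib]
    have hA : (∑ i ∈ Finset.Icc (0:ℤ) M, ∑ j ∈ Finset.Icc (0:ℤ) M,
        coeff M (PowerSeries.X * (Qz (i-1) j * u ^ ((i-1).toNat+2) * v ^ (j.toNat))))
        = ∑ i ∈ Finset.Icc (0:ℤ) M, ∑ j ∈ Finset.Icc (0:ℤ) M,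
            coeff M (PowerSeries.X * (Qz i j * u ^ (i.toNat+2) * v ^ (j.toNat))) :=
      sum_shift_down M
        (fun a => ∑ j ∈ Finset.Icc (0:ℤ) M,
          coeff M (PowerSeries.X * (Qz a j * u ^ (a.toNat+2) * v ^ (j.toNat))))
        (Finset.sum_eq_zero fun j _ => coeff_term_zero_left u v _ _ (by omega))
        (Finset.sum_eq_zero fun j _ => g_vanish u v _ _ (by omega))
    have hB : (∑ i ∈ Finset.Icc (0:ℤ) M,
        coeff M (PowerSeries.X * (Qz (i-1) 0 * u ^ ((i-1).toNat+2) * v ^ ((0:ℤ).toNat))))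
        = ∑ i ∈ Finset.Icc (0:ℤ) M,
            coeff M (PowerSeries.X * (Qz i 0 * u ^ (i.toNat+2) * v ^ ((0:ℤ).toNat))) :=
      sum_shift_down M
        (fun a => coeff M (PowerSeries.X * (Qz a 0 * u ^ (a.toNat+2) * v ^ ((0:ℤ).toNat))))
        (coeff_term_zero_left u v _ _ (by omega))
        (g_vanish u v _ _ (by omega))
    rw [hA, hB, hPhiu]
  have hSc : (∑ i ∈ Finset.Icc (0:ℤ) M, ∑ j ∈ Finset.Icc (0:ℤ) M,
      coeff M (PowerSeries.X * (Qz (i+1) (j-1) * u ^ (i.toNat+1) * v ^ (j.toNat+1))))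
      = (∑ i ∈ Finset.Icc (0:ℤ) M, ∑ j ∈ Finset.Icc (0:ℤ) M,
          coeff M (PowerSeries.X * (Qz i j * u ^ (i.toNat) * v ^ (j.toNat+2))))
        - coeff M (PowerSeries.X * PhiF M v) := by
    have hpt : ∀ i ∈ Finset.Icc (0:ℤ) (M:ℤ), ∀ j ∈ Finset.Icc (0:ℤ) (M:ℤ),
        coeff M (PowerSeries.X * (Qz (i+1) (j-1) * u ^ (i.toNat+1) * v ^ (j.toNat+1)))
        = coeff M (PowerSeries.X * (Qz (i+1) (j-1) * u ^ ((i+1).toNat) * v ^ ((j-1).toNat+2))) := by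
      intro i hi j hj
      rw [Finset.mem_Icc] at hi hj
      by_cases hc : 1 ≤ j
      · rw [show (i+1).toNat = i.toNat+1 by omega, show (j-1).toNat+2 = j.toNat+1 by omega]
      · rw [Qz_neg (by omega)]
        simp
    rw [Finset.sum_congr rfl (fun i hi => Finset.sum_congr rfl (fun j hj => hpt i hi j hj))]
    have hinner : ∀ i : ℤ,
        (∑ j ∈ Finset.Icc (0:ℤ) M,
          coeff M (PowerSeries.X * (Qz (i+1) (j-1) * u ^ ((i+1).toNat) * v ^ ((j-1).toNat+2))))
        = ∑ j ∈ Finset.Icc (0:ℤ) M,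
            coeff M (PowerSeries.X * (Qz (i+1) j * u ^ ((i+1).toNat) * v ^ (j.toNat+2))) := by
      intro i
      exact sum_shift_down M
        (fun b => coeff M (PowerSeries.X * (Qz (i+1) b * u ^ ((i+1).toNat) * v ^ (b.toNat+2))))
        (coeff_term_zero_left u v _ _ (by omega))
        (g_vanish u v _ _ (by omega))
    rw [Finset.sum_congr rfl (fun i _ => hinner i)]
    rw [← hPhiv]
    exact sum_shift_up M
      (fun a => ∑ j ∈ Finset.Icc (0:ℤ) M,
        coeff M (PowerSeries.X * (Qz a j * u ^ (a.toNat) * v ^ (j.toNat+2))))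
      (Finset.sum_eq_zero fun j _ => g_vanish u v _ _ (by omega))
  rw [hS0, hSa, hSb, hSc]
  ring

lemma Phi_one : Phi 1 = Hrow := by
  ext M
  unfold Phi Hrow
  rw [PowerSeries.coeff_mk, PowerSeries.coeff_mk]
  apply Finset.sum_congr rfl
  intro i _
  rw [one_pow, mul_one, coeff_Qz]

lemma telescope (c : ℕ → ℚ) (m : ℕ) :
    ∑ n ∈ Finset.range (m+1), (-1:ℚ)^n * (c n + c (n+1))
      = c 0 + (-1:ℚ)^m * c (m+1) := by
  induction m with
  | zero => simp
  | succ m ih =>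
    rw [Finset.sum_range_succ, ih]
    ring

/-- For the step set `{NE, SE, NW}`,
`(1 - 3t)·Q(1,1;t) = 1 - 2·∑_{n≥0} (-1)ⁿ Yₙ(1) Y_{n+1}(1)`, where `Y₀(1) = 1`
and `Yₙ(1)` are the iterates of the kernel root evaluated at `x = 1`,
characterized by the kernel relation `K(Yₙ(1), Y_{n+1}(1)) = 0` for
`K(x,y) = xy - tx²y² - tx² - ty²` together with `ord_t Yₙ(1) = n` (which pins
the branch: `Y_{n+1}(1) = Y₁(Yₙ(1))` is the small root). -/
theorem counting_gf_iterated_kernel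
    (Ys : ℕ → PowerSeries ℚ)
    (hY0 : Ys 0 = 1)
    (hker : ∀ n,
      Ys n * Ys (n + 1)
        - PowerSeries.X * (Ys n) ^ 2 * (Ys (n + 1)) ^ 2
        - PowerSeries.X * (Ys n) ^ 2
        - PowerSeries.X * (Ys (n + 1)) ^ 2 = 0)
    (hord : ∀ n, (Ys n).order = n) :
    (1 - 3 * PowerSeries.X) * Wgf = 1 - 2 * altSum1 Ys := by
  -- coefficients of Ys below the order vanish
  have hlow : ∀ (n b : ℕ), b < n → coeff b (Ys n) = 0 := by
    intro n b hb
    apply PowerSeries.coeff_of_lt_order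
    rw [hord]
    exact_mod_cast hb
  -- the tail coefficient vanishes
  have hhigh : ∀ m : ℕ, coeff m (PowerSeries.X * Phi (Ys (m+1))) = 0 := by
    intro m
    cases m with
    | zero =>
      rw [PowerSeries.coeff_zero_eq_constantCoeff, map_mul, constantCoeff_X, zero_mul]
    | succ k =>
      rw [PowerSeries.coeff_succ_X_mul]
      have h1 : coeff k (Phi (Ys (k+1+1)))
          = ∑ i ∈ Finset.Icc (0:ℤ) k, coeff k (Qz i 0 * (Ys (k+2)) ^ (i.toNat + 2)) := by
        unfold Phi
        rw [PowerSeries.coeff_mk]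
      rw [h1]
      apply Finset.sum_eq_zero
      intro i _
      apply coeff_mul_zero_right
      intro b hb
      rw [pow_succ]
      apply coeff_mul_zero_right
      intro b' hb'
      exact hlow (k+2) b' (by omega)
  -- kernel relation in product form
  have hprod : ∀ n, Ys n * Ys (n+1)
      = PowerSeries.X * Phi (Ys n) + PowerSeries.X * Phi (Ys (n+1)) := by
    intro n
    have hker' : Ys n * Ys (n+1)
        - PowerSeries.X * ((Ys n)^2 * (Ys (n+1))^2 + (Ys n)^2 + (Ys (n+1))^2) = 0 := by
      linear_combination (hker n)
    have hfe := FE (Ys n) (Ys (n+1))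
    rw [hker', zero_mul] at hfe
    linear_combination -hfe
  -- altSum1 equals X * Hrow
  have haltSum : altSum1 Ys = PowerSeries.X * Hrow := by
    ext m
    unfold altSum1
    rw [PowerSeries.coeff_mk]
    have hterm : ∀ n ∈ Finset.range (m+1),
        (-1:ℚ)^n * coeff m (Ys n * Ys (n+1))
          = (-1:ℚ)^n * ((fun k => coeff m (PowerSeries.X * Phi (Ys k))) n
            + (fun k => coeff m (PowerSeries.X * Phi (Ys k))) (n+1)) := by
      intro n _
      rw [hprod n, map_add]
    rw [Finset.sum_congr rfl hterm, telescope (fun k => coeff m (PowerSeries.X * Phi (Ys k))) m]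
    show coeff m (PowerSeries.X * Phi (Ys 0)) + (-1:ℚ)^m * coeff m (PowerSeries.X * Phi (Ys (m+1))) = _
    rw [hhigh m, mul_zero, add_zero, hY0, Phi_one]
  rw [haltSum]
  have hW : Wgf = PowerSeries.mk fun n => (walkCount St n : ℚ) := rfl
  rw [hW, partA]
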